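/- Let G be a connected irregular graph on n ≥ 3 vertices with m edges, and let w, z be non-adjacent distinct vertices with deg(w) > 2m/n and deg(z) > 2m/n. Then s(G) < s(G + wz), where G + wz is the graph obtained by adding the edge wz. -/

import Mathlib

open Finset

/-- The degree deviation measure `s(G) = ∑_v |deg(v) - 2m/n|`. -/
noncomputable def degDev {V : Type*} [Fintype V] [DecidableEq V]
    (G : SimpleGraph V) [DecidableRel G.Adj] : ℝ :=
  ∑ v : V, |(G.degree v : ℝ) - 2 * G.edgeFinset.card / (Fintype.card V)|

theorem degDev_lt_addEdge {n : ℕ} (hn : 3 ≤ n) (G : SimpleGraph (Fin n))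
    [DecidableRel G.Adj] (hconn : G.Connected)
    (hirr : ∃ u v, G.degree u ≠ G.degree v)
    (w z : Fin n) (hwz : w ≠ z) (hnadj : ¬ G.Adj w z)
    (hw : 2 * G.edgeFinset.card / n < (G.degree w : ℝ))
    (hz : 2 * G.edgeFinset.card / n < (G.degree z : ℝ)) :
    degDev G <
      @degDev _ _ _ (G ⊔ SimpleGraph.fromEdgeSet {s(w, z)}) (Classical.decRel _) := by
  classical
  set G' := G ⊔ SimpleGraph.fromEdgeSet {s(w, z)} with hG'
  letI instG' : DecidableRel G'.Adj := Classical.decRel _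
  have hn' : (3 : ℝ) ≤ n := by exact_mod_cast hn
  have hnpos : (0 : ℝ) < n := by linarith
  have hadj' : ∀ a b, G'.Adj a b ↔ G.Adj a b ∨ (a = w ∧ b = z) ∨ (a = z ∧ b = w) := by
    intro a b
    rw [hG']
    simp only [SimpleGraph.sup_adj, SimpleGraph.fromEdgeSet_adj, Set.mem_singleton_iff,
      Sym2.eq_iff]
    constructor
    · rintro (h | ⟨h, -⟩)
      · exact Or.inl h
      · exact Or.inr h
    · rintro (h | h)
      · exact Or.inl h
      · refine Or.inr ⟨h, ?_⟩
        rcases h with ⟨rfl, rfl⟩ | ⟨rfl, rfl⟩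
        · exact hwz
        · exact hwz.symm
  -- degrees in G'
  have hNw : G'.neighborFinset w = insert z (G.neighborFinset w) := by
    ext a
    simp only [SimpleGraph.mem_neighborFinset, Finset.mem_insert, hadj']
    constructor
    · rintro (h | ⟨-, rfl⟩ | ⟨h, -⟩)
      · exact Or.inr h
      · exact Or.inl rfl
      · exact absurd h hwz
    · rintro (rfl | h)
      · tauto
      · exact Or.inl h
  have hdw' : G'.degree w = G.degree w + 1 := by
    rw [← SimpleGraph.card_neighborFinset_eq_degree, hNw,
      Finset.card_insert_of_notMem (by simpa [SimpleGraph.mem_neighborFinset] using hnadj),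
      SimpleGraph.card_neighborFinset_eq_degree]
  have hNz : G'.neighborFinset z = insert w (G.neighborFinset z) := by
    ext a
    simp only [SimpleGraph.mem_neighborFinset, Finset.mem_insert, hadj']
    constructor
    · rintro (h | ⟨h, -⟩ | ⟨-, rfl⟩)
      · exact Or.inr h
      · exact absurd h hwz.symm
      · exact Or.inl rfl
    · rintro (rfl | h)
      · tauto
      · exact Or.inl h
  have hdz' : G'.degree z = G.degree z + 1 := by
    rw [← SimpleGraph.card_neighborFinset_eq_degree, hNz,
      Finset.card_insert_of_notMem
        (by simp only [SimpleGraph.mem_neighborFinset]; exact fun h => hnadj h.symm),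
      SimpleGraph.card_neighborFinset_eq_degree]
  have hdv : ∀ v, v ≠ w → v ≠ z → G'.degree v = G.degree v := by
    intro v hvw hvz
    rw [← SimpleGraph.card_neighborFinset_eq_degree, ← SimpleGraph.card_neighborFinset_eq_degree]
    congr 1
    ext a
    simp only [SimpleGraph.mem_neighborFinset, hadj']
    constructor
    · rintro (h | ⟨rfl, -⟩ | ⟨rfl, -⟩)
      · exact h
      · exact absurd rfl hvw
      · exact absurd rfl hvz
    · exact Or.inl
  -- edge count
  have hes : G'.edgeSet = insert s(w, z) G.edgeSet := by
    rw [hG', SimpleGraph.edgeSet_sup, SimpleGraph.edgeSet_fromEdgeSet]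
    have h1 : ({s(w, z)} : Set (Sym2 (Fin n))) \ Sym2.diagSet = {s(w, z)} := by
      ext e
      simp only [Set.mem_diff, Set.mem_singleton_iff, Sym2.mem_diagSet, and_iff_left_iff_imp]
      rintro rfl
      simp [Sym2.mk_isDiag_iff, hwz]
    rw [h1, Set.union_singleton]
  have hef : G'.edgeFinset = insert s(w, z) G.edgeFinset := by
    ext e
    rw [SimpleGraph.mem_edgeFinset, Finset.mem_insert, SimpleGraph.mem_edgeFinset, hes,
      Set.mem_insert_iff]
  have hm' : (G'.edgeFinset).card = G.edgeFinset.card + 1 := by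
    rw [hef, Finset.card_insert_of_notMem
      (by simp [SimpleGraph.mem_edgeFinset, hnadj])]
  -- a vertex of small degree
  have hsum : ∑ v : Fin n, ((G.degree v : ℝ)) = 2 * (G.edgeFinset.card : ℝ) := by
    exact_mod_cast congrArg (Nat.cast : ℕ → ℝ) G.sum_degrees_eq_twice_card_edges
  set μ : ℝ := 2 * (G.edgeFinset.card : ℝ) / (n : ℝ) with hμ
  obtain ⟨v₀, hv₀⟩ : ∃ v, (G.degree v : ℝ) < μ := by
    by_contra hcon
    push_neg at hcon
    have h0 : (0 : ℝ) < ∑ v : Fin n, ((G.degree v : ℝ) - μ) := by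
      have := Finset.sum_lt_sum (f := fun _ : Fin n => (0 : ℝ))
        (g := fun v => (G.degree v : ℝ) - μ)
        (fun v _ => sub_nonneg.mpr (hcon v)) ⟨w, Finset.mem_univ w, sub_pos.mpr hw⟩
      simpa using this
    rw [Finset.sum_sub_distrib, hsum, Finset.sum_const, Finset.card_univ, Fintype.card_fin,
      nsmul_eq_mul] at h0
    have hnμ : (n : ℝ) * μ = 2 * (G.edgeFinset.card : ℝ) := by rw [hμ]; field_simp
    linarith
  have hv₀w : v₀ ≠ w := by rintro rfl; linarith
  have hv₀z : v₀ ≠ z := by rintro rfl; linarith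
  -- rewrite degDev
  set f : Fin n → ℝ := fun v => |(G.degree v : ℝ) - μ| with hf
  set g : Fin n → ℝ := fun v => |(G'.degree v : ℝ) - (μ + 2 / n)| with hg
  have hμ2 : 2 * ((G.edgeFinset.card : ℕ) : ℝ) / ((Fintype.card (Fin n) : ℕ) : ℝ) = μ := by
    rw [Fintype.card_fin, hμ]
  have hm2 : ∀ (inst : Fintype (G'.edgeSet)),
      (@SimpleGraph.edgeFinset _ G' inst).card = G.edgeFinset.card + 1 := fun inst => by
    have h : @SimpleGraph.edgeFinset _ G' inst = insert s(w, z) G.edgeFinset := by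
      ext e
      rw [SimpleGraph.mem_edgeFinset, Finset.mem_insert, SimpleGraph.mem_edgeFinset, hes,
        Set.mem_insert_iff]
    rw [h, Finset.card_insert_of_notMem (by simp [SimpleGraph.mem_edgeFinset, hnadj])]
  have hμ' : 2 * ((G.edgeFinset.card + 1 : ℕ) : ℝ) / ((Fintype.card (Fin n) : ℕ) : ℝ)
      = μ + 2 / n := by
    rw [Fintype.card_fin, hμ]
    push_cast
    field_simp
  have hgoal1 : degDev G = ∑ v, f v := by
    rw [degDev]
    simp only [hμ2]
    rfl
  have hgoal2 : @degDev _ _ _ G' instG' = ∑ v, g v := by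
    rw [degDev]
    simp only [hm2, hμ']
    rfl
  -- the three special vertices
  set S : Finset (Fin n) := {w, z, v₀} with hS
  have hSsub : S ⊆ univ := Finset.subset_univ S
  have hsplit : ∀ h : Fin n → ℝ,
      ∑ v, h v = ∑ v ∈ univ \ S, h v + (h w + (h z + h v₀)) := by
    intro h
    rw [← Finset.sum_sdiff hSsub]
    congr 1
    rw [hS, Finset.sum_insert (by simp [hwz, hv₀w.symm]),
      Finset.sum_insert (by simp [hv₀z.symm]), Finset.sum_singleton]
  have hcardS : ((univ \ S).card : ℝ) = (n : ℝ) - 3 := by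
    have hScard : S.card = 3 := by
      rw [hS, Finset.card_insert_of_notMem (by simp [hwz, hv₀w.symm]),
        Finset.card_insert_of_notMem (by simp [hv₀z.symm]), Finset.card_singleton]
    rw [Finset.card_sdiff_of_subset hSsub, Finset.card_univ, Fintype.card_fin, hScard,
      Nat.cast_sub hn]
    norm_num
  -- term estimates
  have hc0 : (0 : ℝ) < 2 / n := by positivity
  have hc1 : 2 / (n : ℝ) < 1 := by rw [div_lt_one hnpos]; linarith
  have h1 : ∀ v ∈ univ \ S, f v - 2 / n ≤ g v := by
    intro v hv
    simp only [hS, Finset.mem_sdiff, Finset.mem_insert, Finset.mem_singleton, Finset.mem_univ,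
      true_and, not_or] at hv
    obtain ⟨hvw, hvz, -⟩ := hv
    simp only [hf, hg, hdv v hvw hvz]
    have habs := abs_sub_abs_le_abs_sub ((G.degree v : ℝ) - μ)
      ((G.degree v : ℝ) - (μ + 2 / n))
    have h2 : |((G.degree v : ℝ) - μ) - ((G.degree v : ℝ) - (μ + 2 / n))| = 2 / n := by
      rw [show ((G.degree v : ℝ) - μ) - ((G.degree v : ℝ) - (μ + 2 / n)) = 2 / n by ring,
        abs_of_pos hc0]
    linarith
  have hgw : g w = f w + (1 - 2 / n) := by
    simp only [hf, hg, hdw']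
    push_cast
    rw [abs_of_pos (by linarith), abs_of_pos (by linarith)]
    ring
  have hgz : g z = f z + (1 - 2 / n) := by
    simp only [hf, hg, hdz']
    push_cast
    rw [abs_of_pos (by linarith), abs_of_pos (by linarith)]
    ring
  have hgv₀ : g v₀ = f v₀ + 2 / n := by
    simp only [hf, hg, hdv v₀ hv₀w hv₀z]
    rw [abs_of_neg (by linarith), abs_of_neg (by linarith)]
    ring
  -- sum over the rest
  have hrest : ∑ v ∈ univ \ S, f v - (2 - 6 / n) ≤ ∑ v ∈ univ \ S, g v := by
    have h := Finset.sum_le_sum h1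
    rw [Finset.sum_sub_distrib, Finset.sum_const, nsmul_eq_mul, hcardS] at h
    have hkey : ((n : ℝ) - 3) * (2 / n) = 2 - 6 / n := by
      field_simp
      ring
    linarith
  have h4 : (0 : ℝ) < 4 / n := by positivity
  have e6 : 6 / (n : ℝ) = 3 * (2 / n) := by ring
  have e4 : 4 / (n : ℝ) = 2 * (2 / n) := by ring
  have final : ∑ v, f v < ∑ v, g v := by
    rw [hsplit f, hsplit g]
    linarith
  have hmain : degDev G < @degDev _ _ _ G' instG' := by
    rw [hgoal1, hgoal2]; exact final
  exact hmain
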